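/- Let (Ω, B(Ω), μ, T) be a measure-preserving dynamical system with Ω ⊆ ℝ a compact metric space, T aperiodic and countable piecewise monotone with partition M into monotony intervals. Then for all ε > 0 and d ∈ ℕ there exists a countable partition Q = {Q_j}_{j∈J} of Ω into intervals and an index set J̃ ⊆ J such that: (i) Q consists of countably many intervals; (ii) Q_j ∩ T^{-k}(Q_j) = ∅ for all k ∈ {1,...,d-1} and j ∈ J̃; (iii) if H(M) < ∞ then H(Q) < ∞; (iv) μ(⋃_{j∈J̃} Q_j) ≥ 1 - ε. -/

import Mathlib

open MeasureTheory Real Filter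
open scoped symmDiff

noncomputable def shEntropy {α I : Type*} [MeasurableSpace α] (μ : Measure α) (P : I → Set α) : ℝ :=
  ∑' i, Real.negMulLog (μ (P i)).toReal

def IsPartitionOf {I : Type*} (Ω : Set ℝ) (P : I → Set ℝ) : Prop :=
  (Pairwise fun i j => Disjoint (P i) (P j)) ∧ (⋃ i, P i) = Ω

def IsIntervalIn (Ω A : Set ℝ) : Prop :=
  A ⊆ Ω ∧ ∀ x ∈ A, ∀ z ∈ A, ∀ y ∈ Ω, x ≤ y → y ≤ z → y ∈ A

def IsMonotonyPartition {I : Type*} (Ω : Set ℝ) (T : ℝ → ℝ) (M : I → Set ℝ) : Prop :=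
  IsPartitionOf Ω M ∧ ∀ i, IsIntervalIn Ω (M i) ∧ (MonotoneOn T (M i) ∨ StrictAntiOn T (M i))

def multiCell {I : Type*} (T : ℝ → ℝ) (P : I → Set ℝ) (n : ℕ) (a : Fin n → I) : Set ℝ :=
  ⋂ k : Fin n, T^[(k : ℕ)] ⁻¹' P (a k)

def ordCell (Ω : Set ℝ) (T : ℝ → ℝ) (n : ℕ) (pp : Equiv.Perm (Fin n)) : Set ℝ :=
  {ω ∈ Ω | ∀ k l : Fin n, k ≤ l → T^[((pp k : Fin n) : ℕ)] ω ≤ T^[((pp l : Fin n) : ℕ)] ω}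

noncomputable def entropyRate {I : Type*} (μ : Measure ℝ) (T : ℝ → ℝ) (P : I → Set ℝ) : ℝ :=
  liminf (fun n : ℕ => shEntropy μ (multiCell T P n) / (n : ℝ)) atTop

noncomputable def permEntropy (Ω : Set ℝ) (μ : Measure ℝ) (T : ℝ → ℝ) : ℝ :=
  liminf (fun n : ℕ => shEntropy μ (ordCell Ω T n) / (n : ℝ)) atTop

noncomputable def ksEntropy (Ω : Set ℝ) (μ : Measure ℝ) (T : ℝ → ℝ) : ℝ :=
  sSup {h : ℝ | ∃ P : ℕ → Set ℝ, IsPartitionOf Ω P ∧ (∀ i, MeasurableSet (P i)) ∧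
    (Summable fun i => Real.negMulLog (μ (P i)).toReal) ∧ h = entropyRate μ T P}

def Aperiodic (μ : Measure ℝ) (T : ℝ → ℝ) : Prop :=
  μ {ω | ∃ t, 1 ≤ t ∧ T^[t] ω = ω} = 0

namespace Stmt8Aux

/-! ### Hulls -/

def rhull (s : Set ℝ) : Set ℝ := {x | ∃ g ∈ s, ∃ g' ∈ s, g ≤ x ∧ x ≤ g'}

lemma subset_rhull (s : Set ℝ) : s ⊆ rhull s := fun x hx => ⟨x, hx, x, hx, le_rfl, le_rfl⟩

lemma rhull_ordConnected (s : Set ℝ) : (rhull s).OrdConnected := by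
  constructor
  rintro x ⟨g, hg, g', hg', hgx, _⟩ y ⟨h, hh, h', hh', _, hyh'⟩ z hz
  exact ⟨g, hg, h', hh', hgx.trans hz.1, hz.2.trans hyh'⟩

/-! ### lower/upper complement pieces -/

def lowSet (I : Set ℝ) : Set ℝ := {x | ∀ y ∈ I, x < y}
def upSet (I : Set ℝ) : Set ℝ := {x | ∀ y ∈ I, y < x}

lemma lowSet_ordConnected (I : Set ℝ) : (lowSet I).OrdConnected := by
  constructor
  rintro x hx y hy z hz t ht
  exact lt_of_le_of_lt hz.2 (hy t ht)

lemma upSet_ordConnected (I : Set ℝ) : (upSet I).OrdConnected := by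
  constructor
  rintro x hx y hy z hz t ht
  exact lt_of_lt_of_le (hx t ht) hz.1

lemma low_up_union (I : Set ℝ) (hI : I.OrdConnected) : lowSet I ∪ upSet I = Iᶜ := by
  ext x
  simp only [Set.mem_union, lowSet, upSet, Set.mem_setOf_eq, Set.mem_compl_iff]
  constructor
  · rintro (h | h) hx
    · exact absurd (h x hx) (lt_irrefl x)
    · exact absurd (h x hx) (lt_irrefl x)
  · intro hx
    by_contra hcon
    push_neg at hcon
    obtain ⟨⟨y, hy, hyx⟩, ⟨y', hy', hxy'⟩⟩ := hcon
    exact hx (hI.out hy hy' ⟨hyx, hxy'⟩)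

lemma lowSet_inter_upSet {I : Set ℝ} (hne : I.Nonempty) : lowSet I ∩ upSet I = ∅ := by
  obtain ⟨y, hy⟩ := hne
  ext x
  simp only [Set.mem_inter_iff, lowSet, upSet, Set.mem_setOf_eq, Set.mem_empty_iff_false, iff_false]
  rintro ⟨h1, h2⟩
  exact absurd ((h1 y hy).trans (h2 y hy)) (lt_irrefl x)

/-! ### list unions -/

def LUn (l : List (Set ℝ)) : Set ℝ := ⋃₀ {s | s ∈ l}

@[simp] lemma LUn_nil : LUn [] = ∅ := by simp [LUn]

@[simp] lemma LUn_cons (a : Set ℝ) (l : List (Set ℝ)) : LUn (a :: l) = a ∪ LUn l := by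
  have h : {s : Set ℝ | s ∈ a :: l} = insert a {s | s ∈ l} := by ext s; simp
  rw [LUn, h, Set.sUnion_insert]; rfl

@[simp] lemma LUn_append (l₁ l₂ : List (Set ℝ)) : LUn (l₁ ++ l₂) = LUn l₁ ∪ LUn l₂ := by
  induction l₁ with
  | nil => simp
  | cons a l ih => simp [ih, Set.union_assoc]

lemma mem_LUn {x : ℝ} {l : List (Set ℝ)} : x ∈ LUn l ↔ ∃ s ∈ l, x ∈ s := by
  simp [LUn, Set.mem_sUnion]

lemma LUn_map_inter (l : List (Set ℝ)) (A : Set ℝ) :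
    LUn (l.map (· ∩ A)) = LUn l ∩ A := by
  induction l with
  | nil => simp
  | cons a l ih => simp [ih, Set.union_inter_distrib_right]

/-! ### complement representation -/

lemma compl_ex (l : List (Set ℝ)) (h : ∀ s ∈ l, s.OrdConnected) :
    ∃ c : List (Set ℝ), (∀ s ∈ c, s.OrdConnected) ∧ LUn c = (LUn l)ᶜ := by
  induction l with
  | nil => exact ⟨[Set.univ], by simp [Set.ordConnected_univ], by simp⟩
  | cons I rest ih =>
    obtain ⟨c, hc1, hc2⟩ := ih (fun s hs => h s (List.mem_cons_of_mem _ hs))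
    refine ⟨c.map (· ∩ lowSet I) ++ c.map (· ∩ upSet I), ?_, ?_⟩
    · intro s hs
      rcases List.mem_append.mp hs with hs | hs <;>
        obtain ⟨u, hu, rfl⟩ := List.mem_map.mp hs
      · exact (hc1 u hu).inter (lowSet_ordConnected I)
      · exact (hc1 u hu).inter (upSet_ordConnected I)
    · rw [LUn_append, LUn_map_inter, LUn_map_inter, ← Set.inter_union_distrib_left,
        low_up_union I (h I (List.mem_cons_self)), hc2, LUn_cons, Set.compl_union]
      exact Set.inter_comm _ _

/-! ### disjointification -/

lemma chop_ex (l : List (Set ℝ)) (h : ∀ s ∈ l, s.OrdConnected) :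
    ∃ l' : List (Set ℝ), (∀ s ∈ l', s.OrdConnected) ∧ l'.Pairwise Disjoint ∧
      (∀ s ∈ l', ∃ t ∈ l, s ⊆ t) ∧ LUn l' = LUn l := by
  induction l with
  | nil => exact ⟨[], by simp, by simp, by simp, rfl⟩
  | cons I rest ih =>
    obtain ⟨l', h1, h2, h3, h4⟩ := ih (fun s hs => h s (List.mem_cons_of_mem _ hs))
    by_cases hne : I = ∅
    · refine ⟨l', h1, h2, fun s hs => ?_, ?_⟩
      · obtain ⟨t, ht, hst⟩ := h3 s hs
        exact ⟨t, List.mem_cons_of_mem _ ht, hst⟩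
      · rw [h4, LUn_cons, hne, Set.empty_union]
    · have hIne : I.Nonempty := Set.nonempty_iff_ne_empty.mpr hne
      refine ⟨I :: (l'.map (· ∩ lowSet I) ++ l'.map (· ∩ upSet I)), ?_, ?_, ?_, ?_⟩
      · intro s hs
        rcases List.mem_cons.mp hs with rfl | hs
        · exact h s (List.mem_cons_self)
        rcases List.mem_append.mp hs with hs | hs <;>
          obtain ⟨u, hu, rfl⟩ := List.mem_map.mp hs
        · exact (h1 u hu).inter (lowSet_ordConnected I)
        · exact (h1 u hu).inter (upSet_ordConnected I)
      · rw [List.pairwise_cons]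
        constructor
        · intro s hs
          rcases List.mem_append.mp hs with hs | hs <;>
            obtain ⟨u, hu, rfl⟩ := List.mem_map.mp hs
          · refine Set.disjoint_left.mpr fun x hxI hx => absurd (hx.2 x hxI) (lt_irrefl x)
          · refine Set.disjoint_left.mpr fun x hxI hx => absurd (hx.2 x hxI) (lt_irrefl x)
        · rw [List.pairwise_append]
          refine ⟨List.Pairwise.map _ (fun a b hab =>
              hab.mono Set.inter_subset_left Set.inter_subset_left) h2,
            List.Pairwise.map _ (fun a b hab =>
              hab.mono Set.inter_subset_left Set.inter_subset_left) h2, ?_⟩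
          intro a ha b hb
          obtain ⟨u, _, rfl⟩ := List.mem_map.mp ha
          obtain ⟨v, _, rfl⟩ := List.mem_map.mp hb
          refine Set.disjoint_left.mpr fun x hx hx' => ?_
          have : x ∈ lowSet I ∩ upSet I := ⟨hx.2, hx'.2⟩
          rw [lowSet_inter_upSet hIne] at this
          exact this
      · intro s hs
        rcases List.mem_cons.mp hs with rfl | hs
        · exact ⟨s, List.mem_cons_self, le_refl s⟩
        rcases List.mem_append.mp hs with hs | hs <;>
          obtain ⟨u, hu, rfl⟩ := List.mem_map.mp hs <;>
          obtain ⟨t, ht, hut⟩ := h3 u hu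
        · exact ⟨t, List.mem_cons_of_mem _ ht, Set.inter_subset_left.trans hut⟩
        · exact ⟨t, List.mem_cons_of_mem _ ht, Set.inter_subset_left.trans hut⟩
      · rw [LUn_cons, LUn_append, LUn_map_inter, LUn_map_inter,
          ← Set.inter_union_distrib_left, low_up_union I (h I (List.mem_cons_self)), h4,
          LUn_cons]
        ext x
        simp only [Set.mem_union, Set.mem_inter_iff, Set.mem_compl_iff]
        tauto

/-! ### cells -/

def cellN (Ω : Set ℝ) (T : ℝ → ℝ) (M : ℕ → Set ℝ) (n : ℕ) (a : ℕ → ℕ) : Set ℝ :=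
  {ω | ω ∈ Ω ∧ ∀ k, k < n → T^[k] ω ∈ M (a k)}

variable {Ω : Set ℝ} {T : ℝ → ℝ} {M : ℕ → Set ℝ}

lemma mem_cellN_succ (hmaps : Set.MapsTo T Ω Ω) {n : ℕ} {a : ℕ → ℕ} {ω : ℝ} :
    ω ∈ cellN Ω T M (n + 1) a ↔
      ω ∈ Ω ∧ ω ∈ M (a 0) ∧ T ω ∈ cellN Ω T M n (fun k => a (k + 1)) := by
  constructor
  · rintro ⟨hΩω, hall⟩
    refine ⟨hΩω, by simpa using hall 0 n.succ_pos, hmaps hΩω, fun k hk => ?_⟩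
    have := hall (k + 1) (by omega)
    simpa [Function.iterate_succ_apply] using this
  · rintro ⟨hΩω, h0, hTΩ, hall⟩
    refine ⟨hΩω, fun k hk => ?_⟩
    cases k with
    | zero => simpa using h0
    | succ k =>
      have := hall k (by omega)
      simpa [Function.iterate_succ_apply] using this

lemma cellN_interval (hM : IsMonotonyPartition Ω T M) (hmaps : Set.MapsTo T Ω Ω) :
    ∀ (n : ℕ) (a : ℕ → ℕ), IsIntervalIn Ω (cellN Ω T M n a) := by
  intro n
  induction n with
  | zero =>
    intro a
    exact ⟨fun x hx => hx.1, fun x _ z _ y hy _ _ => ⟨hy, fun k hk => absurd hk (by omega)⟩⟩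
  | succ n ih =>
    intro a
    refine ⟨fun x hx => hx.1, fun x hx z hz y hy hxy hyz => ?_⟩
    rw [mem_cellN_succ hmaps] at hx hz ⊢
    have hyM : y ∈ M (a 0) := (hM.2 (a 0)).1.2 x hx.2.1 z hz.2.1 y hy hxy hyz
    refine ⟨hy, hyM, ?_⟩
    have hTy : T y ∈ Ω := hmaps hy
    rcases (hM.2 (a 0)).2 with hmono | hanti
    · exact (ih _).2 (T x) hx.2.2 (T z) hz.2.2 (T y) hTy
        (hmono hx.2.1 hyM hxy) (hmono hyM hz.2.1 hyz)
    · have hA := hanti.antitoneOn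
      exact (ih _).2 (T z) hz.2.2 (T x) hx.2.2 (T y) hTy
        (hA hyM hz.2.1 hyz) (hA hx.2.1 hyM hxy)

lemma cellN_mono (hM : IsMonotonyPartition Ω T M) (n : ℕ) (a : ℕ → ℕ) :
    ∀ k, k ≤ n →
      MonotoneOn (T^[k]) (cellN Ω T M n a) ∨ AntitoneOn (T^[k]) (cellN Ω T M n a) := by
  intro k
  induction k with
  | zero =>
    intro _
    left
    intro x _ y _ hxy
    simpa using hxy
  | succ k ih =>
    intro hk
    have hmapk : ∀ ω ∈ cellN Ω T M n a, T^[k] ω ∈ M (a k) := fun ω hω => hω.2 k (by omega)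
    have hstep : ∀ x ∈ cellN Ω T M n a, T^[k+1] x = T (T^[k] x) := fun x _ =>
      Function.iterate_succ_apply' T k x
    rcases ih (by omega) with hm | hm <;> rcases (hM.2 (a k)).2 with hTm | hTa
    · left
      intro x hx y hy hxy
      rw [hstep x hx, hstep y hy]
      exact hTm (hmapk x hx) (hmapk y hy) (hm hx hy hxy)
    · right
      intro x hx y hy hxy
      rw [hstep x hx, hstep y hy]
      exact hTa.antitoneOn (hmapk x hx) (hmapk y hy) (hm hx hy hxy)
    · right
      intro x hx y hy hxy
      rw [hstep x hx, hstep y hy]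
      exact hTm (hmapk y hy) (hmapk x hx) (hm hx hy hxy)
    · left
      intro x hx y hy hxy
      rw [hstep x hx, hstep y hy]
      exact hTa.antitoneOn (hmapk y hy) (hmapk x hx) (hm hx hy hxy)

lemma cellN_cover (hM : IsMonotonyPartition Ω T M) (hmaps : Set.MapsTo T Ω Ω) (n : ℕ)
    {ω : ℝ} (hω : ω ∈ Ω) : ∃ a : ℕ → ℕ, ω ∈ cellN Ω T M n a := by
  have hiter : ∀ k : ℕ, T^[k] ω ∈ Ω := fun k => hmaps.iterate k hω
  have hex : ∀ k : ℕ, ∃ i, T^[k] ω ∈ M i := by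
    intro k
    have : T^[k] ω ∈ ⋃ i, M i := by rw [hM.1.2]; exact hiter k
    simpa using this
  choose a ha using hex
  exact ⟨a, hω, fun k _ => ha k⟩

end Stmt8Aux

-- reopened namespace content appended by script
namespace Stmt8Aux2
end Stmt8Aux2
namespace Stmt8Aux

variable {Ω : Set ℝ} {T : ℝ → ℝ} {M : ℕ → Set ℝ}

def extd (d : ℕ) (a : Fin d → ℕ) : ℕ → ℕ := fun k => if h : k < d then a ⟨k, h⟩ else 0

def gsep (Ω : Set ℝ) (T : ℝ → ℝ) (d : ℕ) (δ : ℝ) : Set ℝ :=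
  {ω | ω ∈ Ω ∧ ∀ k, 1 ≤ k → k < d → δ ≤ |T^[k] ω - ω|}

def sset (Ω : Set ℝ) (T : ℝ → ℝ) (M : ℕ → Set ℝ) (d : ℕ) (δ : ℝ)
    (p : (Fin d → ℕ) × ℤ × (Fin d → Bool)) : Set ℝ :=
  {g | g ∈ gsep Ω T d δ ∧ g ∈ cellN Ω T M d (extd d p.1) ∧
    (p.2.1 : ℝ) * (δ/2) ≤ g ∧ g < (p.2.1 : ℝ) * (δ/2) + δ/2 ∧
    ∀ k, ∀ h : k < d, 1 ≤ k → (p.2.2 ⟨k, h⟩ = true ↔ g + δ ≤ T^[k] g)}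

lemma sset_safe (hM : IsMonotonyPartition Ω T M) (hmaps : Set.MapsTo T Ω Ω)
    {d : ℕ} {δ : ℝ} (hδ : 0 < δ) (p : (Fin d → ℕ) × ℤ × (Fin d → Bool))
    (k : ℕ) (hk1 : 1 ≤ k) (hkd : k < d) :
    (rhull (sset Ω T M d δ p) ∩ Ω) ∩ T^[k] ⁻¹' (rhull (sset Ω T M d δ p) ∩ Ω) = ∅ := by
  obtain ⟨a, i, τ⟩ := p
  rw [Set.eq_empty_iff_forall_notMem]
  rintro x ⟨⟨⟨g, hgS, g', hg'S, hgx, hxg'⟩, hxΩ⟩, hxpre⟩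
  rw [Set.mem_preimage] at hxpre
  obtain ⟨⟨h, hhS, h', hh'S, hhT, hTh'⟩, hTΩ⟩ := hxpre
  obtain ⟨hgG, hgC, hgl, hgr, hgτ⟩ := hgS
  obtain ⟨hg'G, hg'C, hg'l, hg'r, hg'τ⟩ := hg'S
  obtain ⟨hhG, _, hhl, hhr, _⟩ := hhS
  obtain ⟨hh'G, _, hh'l, hh'r, _⟩ := hh'S
  have hxC : x ∈ cellN Ω T M d (extd d a) :=
    (cellN_interval hM hmaps d (extd d a)).2 g hgC g' hg'C x hxΩ hgx hxg'
  have hTx1 : (i : ℝ) * (δ/2) ≤ T^[k] x := le_trans hhl hhT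
  have hTx2 : T^[k] x < (i : ℝ) * (δ/2) + δ/2 := lt_of_le_of_lt hTh' hh'r
  by_cases hτ : τ ⟨k, hkd⟩ = true
  · have hup : g + δ ≤ T^[k] g := (hgτ k hkd hk1).mp hτ
    have hup' : g' + δ ≤ T^[k] g' := (hg'τ k hkd hk1).mp hτ
    rcases cellN_mono hM d (extd d a) k (le_of_lt hkd) with hm | hm
    · have hc := hm hgC hxC hgx
      linarith
    · have hc := hm hxC hg'C hxg'
      linarith
  · have hdn : T^[k] g ≤ g - δ := by
      have habs := hgG.2 k hk1 hkd
      rcases le_abs.mp habs with hcase | hcase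
      · exact absurd ((hgτ k hkd hk1).mpr (by linarith)) hτ
      · linarith
    have hdn' : T^[k] g' ≤ g' - δ := by
      have habs := hg'G.2 k hk1 hkd
      rcases le_abs.mp habs with hcase | hcase
      · exact absurd ((hg'τ k hkd hk1).mpr (by linarith)) hτ
      · linarith
    rcases cellN_mono hM d (extd d a) k (le_of_lt hkd) with hm | hm
    · have hc := hm hxC hg'C hxg'
      linarith
    · have hc := hm hgC hxC hgx
      linarith

lemma gsep_cover (hM : IsMonotonyPartition Ω T M) (hmaps : Set.MapsTo T Ω Ω)
    {d : ℕ} {δ : ℝ} (hδ : 0 < δ) :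
    gsep Ω T d δ ⊆
      ⋃ p : (Fin d → ℕ) × ℤ × (Fin d → Bool), rhull (sset Ω T M d δ p) ∩ Ω := by
  intro g hgG
  obtain ⟨a0, ha0⟩ := cellN_cover hM hmaps d hgG.1
  have hc2 : (0 : ℝ) < δ / 2 := by linarith
  refine Set.mem_iUnion.mpr ⟨⟨fun k => a0 k.1, ⌊g / (δ/2)⌋, fun k => decide (g + δ ≤ T^[k.1] g)⟩,
    subset_rhull _ ?_, hgG.1⟩
  refine ⟨hgG, ?_, ?_, ?_, ?_⟩
  · refine ⟨hgG.1, fun k hk => ?_⟩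
    have := ha0.2 k hk
    simpa [extd, hk] using this
  · have h1 : ((⌊g / (δ/2)⌋ : ℤ) : ℝ) ≤ g / (δ/2) := Int.floor_le _
    have h2 : ((⌊g / (δ/2)⌋ : ℤ) : ℝ) * (δ/2) ≤ (g / (δ/2)) * (δ/2) := by nlinarith
    have h3 : (g / (δ/2)) * (δ/2) = g := div_mul_cancel₀ g (ne_of_gt hc2)
    simpa [h3] using h2
  · have h2 : g / (δ/2) < ⌊g / (δ/2)⌋ + 1 := Int.lt_floor_add_one _
    have h3 : g < (((⌊g / (δ/2)⌋ : ℤ) : ℝ) + 1) * (δ/2) := (div_lt_iff₀ hc2).mp h2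
    nlinarith
  · intro k hkd hk1
    simp

end Stmt8Aux

open Stmt8Aux in
theorem stmt8 (Ω : Set ℝ) (hΩc : IsCompact Ω) (μ : Measure ℝ) [IsProbabilityMeasure μ]
    (hΩ : μ Ω = 1) (T : ℝ → ℝ) (hT : MeasurePreserving T μ μ) (hmaps : Set.MapsTo T Ω Ω)
    (hap : Aperiodic μ T)
    (M : ℕ → Set ℝ) (hM : IsMonotonyPartition Ω T M)
    (ε : ℝ) (hε : 0 < ε) (d : ℕ) (hd : 0 < d) :
    ∃ (Q : ℕ → Set ℝ) (Jt : Set ℕ),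
      IsPartitionOf Ω Q ∧ (∀ j, IsIntervalIn Ω (Q j)) ∧
      (∀ j ∈ Jt, ∀ k, 1 ≤ k → k ≤ d - 1 → Q j ∩ T^[k] ⁻¹' Q j = ∅) ∧
      ((Summable fun i => Real.negMulLog (μ (M i)).toReal) →
        (Summable fun j => Real.negMulLog (μ (Q j)).toReal)) ∧
      ENNReal.ofReal (1 - ε) ≤ μ (⋃ j ∈ Jt, Q j) := by
  classical
  set t : ENNReal := ENNReal.ofReal (1 - ε) with ht
  have htlt1 : t < 1 := by
    rw [ht, ← ENNReal.ofReal_one, ENNReal.ofReal_lt_ofReal_iff one_pos]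
    linarith
  -- choose δ with t < μ (gsep Ω T d δ)
  obtain ⟨δ, hδpos, hδG⟩ : ∃ δ : ℝ, 0 < δ ∧ t < μ (gsep Ω T d δ) := by
    have hmono : Monotone fun n : ℕ => gsep Ω T d (1 / (n + 1)) := by
      intro n m hnm ω hω
      refine ⟨hω.1, fun k hk1 hkd => le_trans ?_ (hω.2 k hk1 hkd)⟩
      apply one_div_le_one_div_of_le
      · positivity
      · push_cast; exact_mod_cast by exact_mod_cast add_le_add_left (Nat.cast_le.mpr hnm) 1
    have hsub : Ω \ {ω | ∃ t, 1 ≤ t ∧ T^[t] ω = ω} ⊆ ⋃ n : ℕ, gsep Ω T d (1 / (n + 1)) := by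
      rintro ω ⟨hΩω, hper⟩
      simp only [Set.mem_setOf_eq, not_exists, not_and] at hper
      obtain ⟨r, hr, hrb⟩ : ∃ r : ℝ, 0 < r ∧ ∀ k, 1 ≤ k → k < d → r ≤ |T^[k] ω - ω| := by
        rcases Nat.lt_or_ge 1 d with hd2 | hd1
        · set s := (Finset.Ico 1 d).image fun k => |T^[k] ω - ω| with hs
          have hsne : s.Nonempty :=
            ⟨_, Finset.mem_image_of_mem _ (Finset.mem_Ico.mpr ⟨le_refl 1, hd2⟩)⟩
          refine ⟨s.min' hsne, ?_, ?_⟩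
          · obtain ⟨k, hk, hkeq⟩ := Finset.mem_image.mp (s.min'_mem hsne)
            rw [← hkeq]
            rw [Finset.mem_Ico] at hk
            have : T^[k] ω ≠ ω := hper k hk.1
            have : T^[k] ω - ω ≠ 0 := sub_ne_zero.mpr this
            exact abs_pos.mpr this
          · intro k hk1 hkd
            exact Finset.min'_le _ _
              (Finset.mem_image_of_mem _ (Finset.mem_Ico.mpr ⟨hk1, hkd⟩))
        · exact ⟨1, one_pos, fun k hk1 hkd => absurd (lt_of_lt_of_le hkd hd1) (by omega)⟩
      obtain ⟨n, hn⟩ := exists_nat_one_div_lt hr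
      exact Set.mem_iUnion.mpr ⟨n, hΩω, fun k hk1 hkd => le_trans hn.le (hrb k hk1 hkd)⟩
    have h1 : (1 : ENNReal) ≤ μ (⋃ n : ℕ, gsep Ω T d (1 / (n + 1))) := by
      calc (1 : ENNReal) = μ Ω := hΩ.symm
        _ = μ (Ω \ {ω | ∃ t, 1 ≤ t ∧ T^[t] ω = ω}) := (measure_diff_null hap).symm
        _ ≤ _ := measure_mono hsub
    rw [hmono.directed_le.measure_iUnion] at h1
    obtain ⟨n, hn⟩ := lt_iSup_iff.mp (lt_of_lt_of_le htlt1 h1)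
    exact ⟨1 / (n + 1), by positivity, hn⟩
  -- enumerate the countable index type
  obtain ⟨f, hf⟩ := exists_surjective_nat ((Fin d → ℕ) × ℤ × (Fin d → Bool))
  set F : ℕ → Set ℝ := fun n => rhull (sset Ω T M d δ (f n)) ∩ Ω with hF
  have hGsub : gsep Ω T d δ ⊆ ⋃ n, F n := by
    rw [hF]
    rw [hf.iUnion_comp fun p => rhull (sset Ω T M d δ p) ∩ Ω]
    exact gsep_cover hM hmaps hδpos
  set PU : ℕ → Set ℝ := fun N => ⋃ n ∈ Finset.range N, F n with hPU
  have hPUmono : Monotone PU := by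
    intro N N' hNN'
    exact Set.biUnion_subset_biUnion_left fun n hn =>
      Finset.mem_range.mpr (lt_of_lt_of_le (Finset.mem_range.mp hn) hNN')
  obtain ⟨N, hN⟩ : ∃ N, t < μ (PU N) := by
    have hPUunion : ⋃ N, PU N = ⋃ n, F n := by
      ext x
      simp only [hPU, Set.mem_iUnion, Finset.mem_range]
      constructor
      · rintro ⟨N, n, hn, hx⟩; exact ⟨n, hx⟩
      · rintro ⟨n, hx⟩; exact ⟨n + 1, n, Nat.lt_succ_self n, hx⟩
    have hle : t < μ (⋃ n, F n) := lt_of_lt_of_le hδG (measure_mono hGsub)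
    rw [← hPUunion, hPUmono.directed_le.measure_iUnion] at hle
    exact lt_iSup_iff.mp hle
  -- lists and disjointification
  set hulls : List (Set ℝ) := (List.range N).map (fun n => rhull (sset Ω T M d δ (f n)))
    with hhulls
  have hhord : ∀ s ∈ hulls, s.OrdConnected := by
    intro s hs
    obtain ⟨n, _, rfl⟩ := List.mem_map.mp hs
    exact rhull_ordConnected _
  obtain ⟨l', hl'ord, hl'disj, hl'prov, hl'un⟩ := chop_ex hulls hhord
  obtain ⟨c, hcord, hcun⟩ := compl_ex l' hl'ord
  obtain ⟨c', hc'ord, hc'disj, _, hc'un⟩ := chop_ex c hcord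
  set LQ : List (Set ℝ) := l' ++ c' with hLQ
  have hLQord : ∀ s ∈ LQ, s.OrdConnected := by
    intro s hs
    rcases List.mem_append.mp hs with hmem | hmem
    exacts [hl'ord s hmem, hc'ord s hmem]
  have hLQdisj : LQ.Pairwise Disjoint := by
    rw [hLQ, List.pairwise_append]
    refine ⟨hl'disj, hc'disj, fun a ha b hb => ?_⟩
    have hac : a ⊆ LUn l' := fun x hx => mem_LUn.mpr ⟨a, ha, hx⟩
    have hbc : b ⊆ (LUn l')ᶜ := fun x hx => by
      have hx' : x ∈ LUn c' := mem_LUn.mpr ⟨b, hb, hx⟩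
      rw [hc'un, hcun] at hx'
      exact hx'
    exact Set.disjoint_left.mpr fun x hxa hxb => (hbc hxb) (hac hxa)
  have hLQuniv : LUn LQ = Set.univ := by
    rw [hLQ, LUn_append, hc'un, hcun, Set.union_compl_self]
  have hLQlen : l'.length ≤ LQ.length := by
    rw [hLQ, List.length_append]; omega
  -- the partition
  set Q : ℕ → Set ℝ := fun n => (if h : n < LQ.length then LQ[n] else ∅) ∩ Ω with hQ
  have hQsubΩ : ∀ n, Q n ⊆ Ω := fun n => Set.inter_subset_right
  refine ⟨Q, {n | n < l'.length}, ⟨?_, ?_⟩, ?_, ?_, ?_, ?_⟩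
  · -- pairwise disjoint
    intro i j hij
    simp only [hQ]
    by_cases hi : i < LQ.length
    · by_cases hj : j < LQ.length
      · have key := List.pairwise_iff_getElem.mp hLQdisj
        rw [dif_pos hi, dif_pos hj]
        rcases Nat.lt_or_ge i j with hlt | hge
        · exact (key i j hi hj hlt).mono Set.inter_subset_left Set.inter_subset_left
        · have hlt : j < i := by omega
          exact ((key j i hj hi hlt).symm).mono Set.inter_subset_left Set.inter_subset_left
      · rw [dif_neg hj, Set.empty_inter]
        exact disjoint_bot_right
    · rw [dif_neg hi, Set.empty_inter]
      exact disjoint_bot_left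
  · -- union is Ω
    apply Set.Subset.antisymm
    · exact Set.iUnion_subset fun n => hQsubΩ n
    · intro x hx
      have hx' : x ∈ LUn LQ := by rw [hLQuniv]; trivial
      obtain ⟨s, hs, hxs⟩ := mem_LUn.mp hx'
      obtain ⟨n, hn, hEq⟩ := List.mem_iff_getElem.mp hs
      refine Set.mem_iUnion.mpr ⟨n, ?_⟩
      simp only [hQ]
      rw [dif_pos hn, hEq]
      exact ⟨hxs, hx⟩
  · -- intervals
    intro j
    by_cases hj : j < LQ.length
    · have hoc : (LQ[j]).OrdConnected := hLQord _ (LQ.getElem_mem hj)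
      constructor
      · exact hQsubΩ j
      · intro x hx z hz y hy hxy hyz
        simp only [hQ, dif_pos hj] at hx hz ⊢
        exact ⟨hoc.out hx.1 hz.1 ⟨hxy, hyz⟩, hy⟩
    · constructor
      · exact hQsubΩ j
      · intro x hx
        simp only [hQ, dif_neg hj, Set.empty_inter] at hx
        exact absurd hx (Set.notMem_empty x)
  · -- safety
    intro j hj k hk1 hkd1
    have hkd : k < d := by omega
    have hjl : j < l'.length := hj
    have hjLQ : j < LQ.length := lt_of_lt_of_le hjl hLQlen
    have hEq : LQ[j] = l'[j] := List.getElem_append_left hjl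
    obtain ⟨s, hs, hsub⟩ := hl'prov l'[j] (l'.getElem_mem hjl)
    obtain ⟨n, _, rfl⟩ := List.mem_map.mp hs
    have hQsub : Q j ⊆ rhull (sset Ω T M d δ (f n)) ∩ Ω := by
      intro x hx
      simp only [hQ, dif_pos hjLQ] at hx
      rw [hEq] at hx
      exact ⟨hsub hx.1, hx.2⟩
    have hsafe := sset_safe hM hmaps hδpos (f n) k hk1 hkd
    have hss : Q j ∩ T^[k] ⁻¹' Q j ⊆
        (rhull (sset Ω T M d δ (f n)) ∩ Ω) ∩
          T^[k] ⁻¹' (rhull (sset Ω T M d δ (f n)) ∩ Ω) :=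
      Set.inter_subset_inter hQsub (Set.preimage_mono hQsub)
    rw [hsafe] at hss
    exact Set.subset_empty_iff.mp hss
  · -- summability
    intro _
    apply summable_of_ne_finset_zero (s := Finset.range LQ.length)
    intro j hj
    have hjn : ¬ j < LQ.length := by simpa using hj
    simp [hQ, hjn]
  · -- measure bound
    have hun : ⋃ j ∈ {n | n < l'.length}, Q j = LUn l' ∩ Ω := by
      apply Set.Subset.antisymm
      · intro x hx
        obtain ⟨j, hj, hxj⟩ := Set.mem_iUnion₂.mp hx
        have hjl : j < l'.length := hj
        have hjLQ : j < LQ.length := lt_of_lt_of_le hjl hLQlen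
        simp only [hQ, dif_pos hjLQ] at hxj
        have hEq : LQ[j] = l'[j] := List.getElem_append_left hjl
        rw [hEq] at hxj
        exact ⟨mem_LUn.mpr ⟨l'[j], l'.getElem_mem hjl, hxj.1⟩, hxj.2⟩
      · rintro x ⟨hxl, hxΩ⟩
        obtain ⟨s, hs, hxs⟩ := mem_LUn.mp hxl
        obtain ⟨j, hj, hEq⟩ := List.mem_iff_getElem.mp hs
        have hjLQ : j < LQ.length := lt_of_lt_of_le hj hLQlen
        refine Set.mem_iUnion₂.mpr ⟨j, hj, ?_⟩
        simp only [hQ, dif_pos hjLQ]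
        have hEq2 : LQ[j] = l'[j] := List.getElem_append_left hj
        rw [hEq2, hEq]
        exact ⟨hxs, hxΩ⟩
    have hPUe : LUn hulls ∩ Ω = PU N := by
      apply Set.Subset.antisymm
      · rintro x ⟨hxl, hxΩ⟩
        obtain ⟨s, hs, hxs⟩ := mem_LUn.mp hxl
        obtain ⟨n, hn, rfl⟩ := List.mem_map.mp hs
        rw [List.mem_range] at hn
        exact Set.mem_biUnion (Finset.mem_range.mpr hn) ⟨hxs, hxΩ⟩
      · intro x hx
        obtain ⟨n, hn, hxn⟩ := Set.mem_iUnion₂.mp hx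
        rw [Finset.mem_range] at hn
        exact ⟨mem_LUn.mpr ⟨_, List.mem_map.mpr ⟨n, List.mem_range.mpr hn, rfl⟩, hxn.1⟩, hxn.2⟩
    rw [hun, hl'un, hPUe]
    exact le_of_lt hN
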